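/- arXiv:2005.03766 — 5 statements merged into one kernel-verified Lean document; each statement's English description precedes it below -/
import Mathlib

section
/- The sequence defined by t_1 = 1 and t_{k+1} = (1 + sqrt(1 + 4 t_k^2))/2 satisfies 1/t_k ≤ 2/(k+1) for all k ≥ 1 (equivalently, t_k ≥ (k+1)/2). -/
/-- The FISTA stepsize sequence `t 1 = 1`, `t (k+1) = (1 + √(1 + 4 t k ^ 2))/2`
satisfies `1 / t k ≤ 2 / (k + 1)` for all `k ≥ 1`. -/
theorem fista_t_lower_bound (t : ℕ → ℝ) (h1 : t 1 = 1)
    (hrec : ∀ k : ℕ, 1 ≤ k → t (k + 1) = (1 + Real.sqrt (1 + 4 * t k ^ 2)) / 2) :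
    ∀ k : ℕ, 1 ≤ k → 1 / t k ≤ 2 / ((k : ℝ) + 1) := by
  have key : ∀ k : ℕ, 1 ≤ k → ((k : ℝ) + 1) / 2 ≤ t k := by
    intro k hk
    induction k with
    | zero => omega
    | succ n ih =>
      rcases Nat.eq_or_lt_of_le hk with h | h
      · simp [← h, h1]
      · have hn : 1 ≤ n := by omega
        have ihn := ih hn
        have htn : 0 ≤ t n := le_trans (by positivity) ihn
        rw [hrec n hn]
        have hs : 2 * t n ≤ Real.sqrt (1 + 4 * t n ^ 2) := by
          rw [show (2 * t n) = Real.sqrt ((2 * t n)^2) by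
            rw [Real.sqrt_sq (by positivity)]]
          apply Real.sqrt_le_sqrt; nlinarith
        push_cast
        nlinarith
  intro k hk
  have h := key k hk
  have hpos : (0:ℝ) < t k := lt_of_lt_of_le (by positivity) h
  rw [div_le_div_iff₀ hpos (by positivity)]
  linarith
end

section
/- Let f : E → ℝ be convex differentiable with L-Lipschitz gradient and g : E → ℝ ∪ {+∞} proper closed convex; let F = f + g. Fix τ ∈ (0,1], α ∈ [0, (1-τ)L/τ], y ∈ E, and suppose (x, v, ε) satisfies v ∈ ∂_ε g(x) + (L/τ)(x - y) + ∇f(y) and ‖τv‖² + 2τεL ≤ L[(1-τ)L - ατ]‖x - y‖². Then for every z ∈ E: F(z) - F(x) ≥ (L/(2τ))[‖x - z - (τ/L)v‖² - ‖y - z‖²] + (α/2)‖y - x‖². -/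
noncomputable section

/-- The ε-subdifferential of an extended-real-valued function `g` at `x`:
`∂_ε g(x) = {u | ∀ z, g z ≥ g x + ⟨u, z - x⟩ - ε}`. -/
def epsSubdiff {E : Type*} [NormedAddCommGroup E] [InnerProductSpace ℝ E]
    (g : E → EReal) (ε : ℝ) (x : E) : Set E :=
  {u | ∀ z : E, g x + (((inner ℝ u (z - x) : ℝ) - ε : ℝ) : EReal) ≤ g z}

/-- `g` is proper: it takes a value `< ⊤` somewhere and is never `⊥`. -/
def ProperFn {E : Type*} (g : E → EReal) : Prop :=
  (∃ x, g x ≠ ⊤) ∧ ∀ x, g x ≠ ⊥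

/-- Convexity for an extended-real-valued function. -/
def ConvexFn {E : Type*} [NormedAddCommGroup E] [Module ℝ E] (g : E → EReal) : Prop :=
  ∀ x y : E, ∀ a b : ℝ, 0 ≤ a → 0 ≤ b → a + b = 1 →
    g (a • x + b • y) ≤ (a : EReal) * g x + (b : EReal) * g y

open RealInnerProductSpace in
/-- Gradient inequality for a convex function. -/
lemma grad_convex_ineq' {E : Type*} [NormedAddCommGroup E] [InnerProductSpace ℝ E]
    [CompleteSpace E] (f : E → ℝ) (hf : ConvexOn ℝ Set.univ f) {y : E} {gy : E}
    (h : HasGradientAt f gy y) (z : E) : f y + ⟪gy, z - y⟫ ≤ f z := by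
  set c : ℝ → E := fun t => t • (z - y) + y with hc
  have hφ : ConvexOn ℝ Set.univ (fun t : ℝ => f (c t)) := by
    have h2 := hf.comp_affineMap (AffineMap.lineMap y z : ℝ →ᵃ[ℝ] E)
    simp only [Set.preimage_univ] at h2
    have heq : (fun t : ℝ => f (c t)) = f ∘ ⇑(AffineMap.lineMap y z : ℝ →ᵃ[ℝ] E) := by
      funext t
      simp only [hc, Function.comp_apply, AffineMap.lineMap_apply_module]
      congr 1
      module
    rwa [heq]
  have hcd : HasDerivAt c (z - y) 0 := by
    simpa [hc] using ((hasDerivAt_id (0:ℝ)).smul_const (z - y)).add_const y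
  have hc0 : c 0 = y := by simp [hc]
  have hder : HasDerivAt (fun t => f (c t)) ⟪gy, z - y⟫ 0 := by
    have hF : HasFDerivAt f (InnerProductSpace.toDual ℝ E gy : E →L[ℝ] ℝ) (c 0) := by
      rw [hc0]; exact h.hasFDerivAt
    have h3 := hF.comp_hasDerivAt 0 hcd
    simp at h3
    exact h3
  have := hφ.le_slope_of_hasDerivAt (Set.mem_univ (0:ℝ)) (Set.mem_univ (1:ℝ)) one_pos hder
  simp [slope, hc] at this
  linarith

open RealInnerProductSpace in
/-- Descent lemma for a function with Lipschitz gradient. -/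
lemma descent_lemma' {E : Type*} [NormedAddCommGroup E] [InnerProductSpace ℝ E]
    [CompleteSpace E] (f : E → ℝ) (f' : E → E) (L : ℝ)
    (hgrad : ∀ x : E, HasGradientAt f (f' x) x)
    (hlip : ∀ a b : E, ‖f' a - f' b‖ ≤ L * ‖a - b‖) (x y : E) :
    f x ≤ f y + ⟪f' y, x - y⟫ + L / 2 * ‖x - y‖ ^ 2 := by
  set c : ℝ → E := fun t => t • (x - y) + y with hc
  set ψ : ℝ → ℝ := fun t => f (c t) - t * ⟪f' y, x - y⟫ - L / 2 * t ^ 2 * ‖x - y‖ ^ 2 with hψdef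
  have hcd : ∀ t : ℝ, HasDerivAt c (x - y) t := fun t => by
    simpa [hc] using ((hasDerivAt_id t).smul_const (x - y)).add_const y
  have hder : ∀ t : ℝ, HasDerivAt ψ
      (⟪f' (c t), x - y⟫ - ⟪f' y, x - y⟫ - L * t * ‖x - y‖ ^ 2) t := by
    intro t
    have h1 : HasDerivAt (fun t => f (c t)) ⟪f' (c t), x - y⟫ t := by
      have h4 := (hgrad (c t)).hasFDerivAt.comp_hasDerivAt t (hcd t)
      simp at h4
      exact h4
    have h2 : HasDerivAt (fun t : ℝ => t * ⟪f' y, x - y⟫) ⟪f' y, x - y⟫ t := by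
      simpa using (hasDerivAt_id t).mul_const ⟪f' y, x - y⟫
    have h3 : HasDerivAt (fun t : ℝ => L / 2 * t ^ 2 * ‖x - y‖ ^ 2)
        (L * t * ‖x - y‖ ^ 2) t := by
      have := ((hasDerivAt_pow 2 t).const_mul (L / 2)).mul_const (‖x - y‖ ^ 2)
      refine this.congr_deriv ?_
      ring
    exact (h1.sub h2).sub h3
  have hmono : AntitoneOn ψ (Set.Icc 0 1) := by
    apply antitoneOn_of_deriv_nonpos (convex_Icc 0 1)
    · exact fun t _ => ((hder t).differentiableAt).continuousAt.continuousWithinAt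
    · intro t _
      exact ((hder t).differentiableAt).differentiableWithinAt
    · intro t ht
      rw [interior_Icc] at ht
      rw [(hder t).deriv]
      have h1 : ⟪f' (c t) - f' y, x - y⟫ ≤ ‖f' (c t) - f' y‖ * ‖x - y‖ :=
        real_inner_le_norm _ _
      have h2 : ‖f' (c t) - f' y‖ ≤ L * (t * ‖x - y‖) := by
        have hl := hlip (c t) y
        have hcy : c t - y = t • (x - y) := by simp [hc]
        rw [hcy, norm_smul, Real.norm_eq_abs, abs_of_pos ht.1] at hl
        linarith [hl]
      have h3 : ⟪f' (c t) - f' y, x - y⟫ = ⟪f' (c t), x - y⟫ - ⟪f' y, x - y⟫ :=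
        inner_sub_left _ _ _
      nlinarith [norm_nonneg (x - y), ht.1.le]
  have h01 := hmono (Set.left_mem_Icc.2 zero_le_one) (Set.right_mem_Icc.2 zero_le_one)
    zero_le_one
  have hψ0 : ψ 0 = f y := by simp [hψdef, hc]
  have hψ1 : ψ 1 = f x - ⟪f' y, x - y⟫ - L / 2 * ‖x - y‖ ^ 2 := by simp [hψdef, hc]
  rw [hψ0, hψ1] at h01
  linarith

/-- Scalar version of the key estimate. -/
lemma scalar_key' (L τ α ε gx gz fx fy fz A B V P Q w r : ℝ)
    (hL : 0 < L) (hτ : 0 < τ)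
    (hsub : gx + (-P - L / τ * Q - w - ε) ≤ gz)
    (hconv : fy + (w + r) ≤ fz)
    (hdesc : fx ≤ fy + r + L / 2 * A)
    (herr : τ ^ 2 * V + 2 * τ * ε * L ≤ L * ((1 - τ) * L - α * τ) * A) :
    fx + gx + (L / (2 * τ) * ((B - 2 * (τ / L) * P + (τ / L) ^ 2 * V) - (A + 2 * Q + B))
      + α / 2 * A) ≤ fz + gz := by
  have h1 : L / (2 * τ) * ((B - 2 * (τ / L) * P + (τ / L) ^ 2 * V) - (A + 2 * Q + B))
      + α / 2 * A
      = -P + τ / (2 * L) * V - L / (2 * τ) * A - L / τ * Q + α / 2 * A := by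
    field_simp
    ring
  have h2 : τ / (2 * L) * V + ε ≤ L / (2 * τ) * A - L / 2 * A - α / 2 * A := by
    rw [← sub_nonneg]
    have he : L / (2 * τ) * A - L / 2 * A - α / 2 * A - (τ / (2 * L) * V + ε)
        = (L * ((1 - τ) * L - α * τ) * A - (τ ^ 2 * V + 2 * τ * ε * L)) / (2 * L * τ) := by
      field_simp
    rw [he]
    exact div_nonneg (by linarith) (by positivity)
  rw [h1]
  linarith

open RealInnerProductSpace in
/-- Key estimate for the IR rule (Proposition 4.2): if `(x, v, ε)` satisfies the IR rule
at `y`, then for every `z`,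
`F(z) - F(x) ≥ (L/(2τ))[‖x - z - (τ/L)v‖² - ‖y - z‖²] + (α/2)‖y - x‖²`. -/
theorem IR_key_estimate {E : Type*} [NormedAddCommGroup E] [InnerProductSpace ℝ E]
    [FiniteDimensional ℝ E]
    (L τ α : ℝ) (hL : 0 < L) (hτ : 0 < τ ∧ τ ≤ 1) (hα : 0 ≤ α ∧ α ≤ (1 - τ) * L / τ)
    (f : E → ℝ) (f' : E → E) (hfconv : ConvexOn ℝ Set.univ f)
    (hgrad : ∀ x : E, HasGradientAt f (f' x) x)
    (hlip : ∀ x y : E, ‖f' x - f' y‖ ≤ L * ‖x - y‖)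
    (g : E → EReal) (hgp : ProperFn g) (hglsc : LowerSemicontinuous g) (hgconv : ConvexFn g)
    (y x v : E) (ε : ℝ) (hε : 0 ≤ ε)
    (hincl : v - (L / τ) • (x - y) - f' y ∈ epsSubdiff g ε x)
    (herr : ‖τ • v‖ ^ 2 + 2 * τ * ε * L ≤ L * ((1 - τ) * L - α * τ) * ‖x - y‖ ^ 2) :
    ∀ z : E, ((f x : EReal) + g x) +
        ((L / (2 * τ) * (‖x - z - (τ / L) • v‖ ^ 2 - ‖y - z‖ ^ 2)
          + α / 2 * ‖y - x‖ ^ 2 : ℝ) : EReal)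
      ≤ (f z : EReal) + g z := by
  obtain ⟨hτ0, hτ1⟩ := hτ
  obtain ⟨⟨x₀, hx₀⟩, hbot⟩ := hgp
  have hgx_ne_top : g x ≠ ⊤ := by
    intro h
    have h2 := hincl x₀
    rw [h, EReal.top_add_of_ne_bot (EReal.coe_ne_bot _)] at h2
    exact hx₀ (top_le_iff.1 h2)
  have hgxr := EReal.coe_toReal hgx_ne_top (hbot x)
  -- rewrite herr
  have e5 : ‖τ • v‖ ^ 2 = τ ^ 2 * ‖v‖ ^ 2 := by
    rw [norm_smul, Real.norm_eq_abs, mul_pow, sq_abs]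
  have e6 : ‖x - y‖ = ‖y - x‖ := norm_sub_rev x y
  rw [e5, e6] at herr
  intro z
  by_cases hz : g z = ⊤
  · rw [hz]
    rw [EReal.add_top_of_ne_bot (EReal.coe_ne_bot _)]
    exact le_top
  · have hgzr := EReal.coe_toReal hz (hbot z)
    have hsub' : (g x).toReal + (⟪v - (L / τ) • (x - y) - f' y, z - x⟫ - ε)
        ≤ (g z).toReal := by
      have h2 := hincl z
      rw [← hgxr, ← hgzr, ← EReal.coe_add] at h2
      exact_mod_cast h2
    have hconv' := grad_convex_ineq' f hfconv (hgrad y) z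
    have hdesc' := descent_lemma' f f' L hgrad hlip x y
    rw [e6] at hdesc'
    -- inner-product expansions
    have e3 : ⟪v - (L / τ) • (x - y) - f' y, z - x⟫
        = -⟪x - z, v⟫ - L / τ * ⟪x - y, z - x⟫ - ⟪f' y, z - x⟫ := by
      rw [inner_sub_left, inner_sub_left, real_inner_smul_left]
      have hv : ⟪v, z - x⟫ = -⟪x - z, v⟫ := by
        rw [real_inner_comm, show z - x = -(x - z) from (neg_sub x z).symm,
          inner_neg_left]
      rw [hv]
    rw [e3] at hsub'
    have e4 : ⟪f' y, z - y⟫ = ⟪f' y, z - x⟫ + ⟪f' y, x - y⟫ := by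
      rw [← inner_add_right]
      congr 1
      abel
    rw [e4] at hconv'
    have e1 : ‖x - z - (τ / L) • v‖ ^ 2
        = ‖x - z‖ ^ 2 - 2 * (τ / L) * ⟪x - z, v⟫ + (τ / L) ^ 2 * ‖v‖ ^ 2 := by
      rw [norm_sub_sq_real, real_inner_smul_right, norm_smul, Real.norm_eq_abs, mul_pow,
        sq_abs]
      ring
    have e2 : ‖y - z‖ ^ 2 = ‖y - x‖ ^ 2 + 2 * ⟪x - y, z - x⟫ + ‖x - z‖ ^ 2 := by
      rw [show y - z = (y - x) + (x - z) by abel, norm_add_sq_real]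
      have hq : ⟪y - x, x - z⟫ = ⟪x - y, z - x⟫ := by
        rw [show x - y = -(y - x) from (neg_sub y x).symm,
          show z - x = -(x - z) from (neg_sub x z).symm, inner_neg_neg]
      rw [hq]
    rw [← hgxr, ← hgzr, ← EReal.coe_add, ← EReal.coe_add, ← EReal.coe_add,
      EReal.coe_le_coe_iff, e1, e2]
    exact scalar_key' L τ α ε (g x).toReal (g z).toReal (f x) (f y) (f z)
      (‖y - x‖ ^ 2) (‖x - z‖ ^ 2) (‖v‖ ^ 2) ⟪x - z, v⟫ ⟪x - y, z - x⟫
      ⟪f' y, z - x⟫ ⟪f' y, x - y⟫ hL hτ0 (by linarith) hconv' hdesc' herr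
end
end

section
/- In the IER Rule with σ = 0, the conditions force ε = 0, v = (y - x̃)/α, and x̃ = Prox_{(α/(1+αL))g}(y - (α/(1+αL))∇f(y)); i.e., J_e^{α,0}(y, 1/L) is a singleton. -/
noncomputable section

set_option maxHeartbeats 1000000 in
/-- With `σ = 0` the IER rule forces `ε = 0`, `v = (1/α)(y - x̃)` and
`x̃ = Prox_{λ g}(y - λ ∇f(y))` with `λ = α/(1 + αL)`; i.e. `J_e^{α,0}(y, 1/L)` is a singleton. -/
theorem IER_rule_sigma_zero_singleton {E : Type*} [NormedAddCommGroup E] [InnerProductSpace ℝ E]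
    [FiniteDimensional ℝ E]
    (L α σ : ℝ) (hL : 0 < L) (hα : 1 / L < α) (hσ : σ = 0)
    (f : E → ℝ) (f' : E → E) (hfconv : ConvexOn ℝ Set.univ f)
    (hgrad : ∀ x : E, HasGradientAt f (f' x) x)
    (hlip : ∀ x y : E, ‖f' x - f' y‖ ≤ L * ‖x - y‖)
    (g : E → EReal) (hgp : ProperFn g) (hglsc : LowerSemicontinuous g) (hgconv : ConvexFn g)
    (y p : E)
    (hprox : ∀ z : E,
        g p + ((1 / (2 * (α / (1 + α * L)))
            * ‖p - (y - (α / (1 + α * L)) • f' y)‖ ^ 2 : ℝ) : EReal)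
        ≤ g z + ((1 / (2 * (α / (1 + α * L)))
            * ‖z - (y - (α / (1 + α * L)) • f' y)‖ ^ 2 : ℝ) : EReal)) :
    {q : E × E × ℝ | 0 ≤ q.2.2 ∧
        q.2.1 - L • (q.1 - y) - f' y ∈ epsSubdiff g q.2.2 q.1 ∧
        ‖α • q.2.1 + q.1 - y‖ ^ 2 + 2 * α * q.2.2 ≤ σ ^ 2 * ‖q.1 - y‖ ^ 2}
      = {(p, (1 / α) • (y - p), (0 : ℝ))} := by
  subst hσ
  have hα0 : 0 < α := lt_trans (by positivity) hα
  have hden : 0 < 1 + α * L := by positivity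
  set lam : ℝ := α / (1 + α * L) with hlamdef
  have hlam0 : 0 < lam := by positivity
  set w : E := y - lam • f' y with hwdef
  obtain ⟨x0, hx0⟩ := hgp.1
  have hbot := hgp.2
  have hfin : ∀ x : E, g x ≠ ⊤ → g x = (((g x).toReal : ℝ) : EReal) :=
    fun x hx => (EReal.coe_toReal hx (hbot x)).symm
  -- finiteness of g p
  have hgpt : g p ≠ ⊤ := by
    intro h
    have h1 := hprox x0
    rw [h, EReal.top_add_coe] at h1
    have h2 : g x0 + ((1 / (2 * lam) * ‖x0 - w‖ ^ 2 : ℝ) : EReal) < ⊤ :=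
      EReal.add_lt_top hx0 (EReal.coe_ne_top _)
    exact absurd (top_le_iff.mp h1) (ne_of_lt h2)
  set Gp : ℝ := (g p).toReal with hGpdef
  have hGp : g p = (Gp : EReal) := hfin p hgpt
  -- the key subgradient lemma for p
  have key : ∀ z : E, g p + (((inner ℝ ((1/lam) • (w - p)) (z - p) : ℝ) : ℝ) : EReal) ≤ g z := by
    intro z
    by_cases hz : g z = ⊤
    · rw [hz]; exact le_top
    have hGz : g z = (((g z).toReal : ℝ) : EReal) := hfin z hz
    set Gz : ℝ := (g z).toReal with hGzdef
    rw [hGp, hGz, ← EReal.coe_add, EReal.coe_le_coe_iff]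
    rw [real_inner_smul_left]
    set A : ℝ := inner ℝ (w - p) (z - p) with hA
    set B : ℝ := ‖z - p‖ ^ 2 with hB
    have hB0 : 0 ≤ B := by positivity
    have step : ∀ t : ℝ, 0 < t → t ≤ 1 → Gp + (1/lam) * A ≤ Gz + t/(2*lam) * B := by
      intro t ht0 ht1
      set zt : E := p + t • (z - p) with hzt
      have hconv := hgconv z p t (1-t) (le_of_lt ht0) (by linarith) (by ring)
      have hzteq : t • z + (1-t) • p = zt := by rw [hzt]; module
      rw [hzteq, hGp, hGz, ← EReal.coe_mul, ← EReal.coe_mul, ← EReal.coe_add] at hconv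
      have hztt : g zt ≠ ⊤ := ne_top_of_le_ne_top (EReal.coe_ne_top _) hconv
      have hGt : g zt = (((g zt).toReal : ℝ) : EReal) := hfin zt hztt
      set Gt : ℝ := (g zt).toReal with hGtdef
      rw [hGt, EReal.coe_le_coe_iff] at hconv
      have hpr := hprox zt
      rw [hGp, hGt, ← EReal.coe_add, ← EReal.coe_add, EReal.coe_le_coe_iff] at hpr
      have hexp : ‖zt - w‖ ^ 2 = ‖p - w‖ ^ 2 + 2 * (t * (-A)) + t ^ 2 * B := by
        have h1 : zt - w = (p - w) + t • (z - p) := by rw [hzt]; abel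
        rw [h1, norm_add_sq_real, real_inner_smul_right, norm_smul]
        have : (inner ℝ (p - w) (z - p) : ℝ) = -A := by
          rw [hA, ← inner_neg_left, neg_sub]
        rw [this, hB]
        rw [Real.norm_eq_abs, abs_of_pos ht0]
        ring
      rw [hexp] at hpr
      -- combine
      have hmul : t * (Gp + (1/lam) * A) ≤ t * (Gz + t/(2*lam) * B) := by
        have hlaminv : 0 < (lam)⁻¹ := by positivity
        have e1 : Gp ≤ Gt - (t * A) / lam + t^2 * B / (2*lam) := by
          have : 1 / (2*lam) * (‖p - w‖^2 + 2*(t*(-A)) + t^2*B)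
              = 1/(2*lam) * ‖p - w‖^2 - (t*A)/lam + t^2*B/(2*lam) := by
            field_simp; ring
          rw [this] at hpr
          linarith
        have e2 : Gt ≤ t * Gz + (1-t) * Gp := hconv
        have : t * Gp + (t * A)/lam ≤ t * Gz + t^2 * B / (2*lam) := by linarith
        calc t * (Gp + (1/lam) * A) = t * Gp + (t*A)/lam := by field_simp
          _ ≤ t * Gz + t^2 * B/(2*lam) := this
          _ = t * (Gz + t/(2*lam) * B) := by field_simp
      exact le_of_mul_le_mul_left hmul ht0
    refine le_of_forall_pos_le_add (fun ε hε => ?_)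
    set t : ℝ := min 1 (2*lam*ε/(B+1)) with htdef
    have ht0 : 0 < t := lt_min one_pos (by positivity)
    have ht1 : t ≤ 1 := min_le_left _ _
    have h1 := step t ht0 ht1
    have h2 : t * (B+1) ≤ 2*lam*ε := by
      have := min_le_right 1 (2*lam*ε/(B+1))
      calc t * (B+1) ≤ (2*lam*ε/(B+1)) * (B+1) := by
            apply mul_le_mul_of_nonneg_right this (by linarith)
        _ = 2*lam*ε := by field_simp
    have h3 : t/(2*lam) * B ≤ ε := by
      rw [div_mul_eq_mul_div, div_le_iff₀ (by positivity)]
      nlinarith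
    linarith
  -- now prove set equality
  ext ⟨x, v, e⟩
  simp only [Set.mem_setOf_eq, Set.mem_singleton_iff, Prod.mk.injEq]
  constructor
  · rintro ⟨he0, hsub, hq⟩
    rw [show (0:ℝ)^2 * ‖x - y‖^2 = 0 by ring] at hq
    have hn0 : ‖α • v + x - y‖ ^ 2 = 0 := by nlinarith [sq_nonneg ‖α • v + x - y‖]
    have he : e = 0 := by nlinarith
    have hveq : α • v + x - y = 0 := by
      rw [← norm_eq_zero]; exact pow_eq_zero_iff (n := 2) (by norm_num) |>.mp hn0
    have hv : v = (1/α) • (y - x) := by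
      have : α • v = y - x := by
        have := hveq; rw [add_sub_assoc] at this
        have h2 := eq_neg_of_add_eq_zero_left this
        rw [h2]; abel
      rw [← this, smul_smul, one_div, inv_mul_cancel₀ (ne_of_gt hα0), one_smul]
    have hu' : v - L • (x - y) - f' y = (1/lam) • (w - x) := by
      rw [hv, hwdef, hlamdef]
      have h1 : (1 + α * L) ≠ 0 := ne_of_gt hden
      have h2 : α ≠ 0 := ne_of_gt hα0
      match_scalars <;> (field_simp; try ring)
    -- finiteness of g x
    have hgxt : g x ≠ ⊤ := by
      intro h
      have h1 := hsub x0
      rw [h, EReal.top_add_coe] at h1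
      exact hx0 (top_le_iff.mp h1)
    have hGx : g x = (((g x).toReal : ℝ) : EReal) := hfin x hgxt
    set Gx : ℝ := (g x).toReal with hGxdef
    have h1 := hsub p
    rw [hGx, hGp, ← EReal.coe_add, EReal.coe_le_coe_iff] at h1
    have h2 := key x
    rw [hGp, hGx, ← EReal.coe_add, EReal.coe_le_coe_iff] at h2
    -- monotonicity
    have hxp : x = p := by
      have e1' : (inner ℝ (v - L • (x - y) - f' y) (p - x) : ℝ)
          = (1/lam) * inner ℝ (w - x) (p - x) := by
        rw [hu', real_inner_smul_left]
      have e2' : (inner ℝ ((1/lam) • (w - p)) (x - p) : ℝ)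
          = -((1/lam) * inner ℝ (w - p) (p - x)) := by
        rw [real_inner_smul_left, show x - p = -(p - x) by abel, inner_neg_right]
        ring
      have einn : (inner ℝ (w - x) (p - x) : ℝ) - inner ℝ (w - p) (p - x) = ‖p - x‖^2 := by
        rw [← inner_sub_left, show (w - x) - (w - p) = p - x by abel,
          real_inner_self_eq_norm_sq]
      have hl : (0:ℝ) < 1/lam := by positivity
      have hs : (1/lam) * ‖p - x‖^2 ≤ 0 := by
        rw [e1'] at h1; rw [e2'] at h2; rw [← einn]
        linarith
      have hN : ‖p - x‖^2 ≤ 0 := by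
        have h' : (1/lam) * ‖p - x‖^2 ≤ (1/lam) * 0 := by rw [mul_zero]; exact hs
        exact le_of_mul_le_mul_left h' hl
      have : p - x = 0 := by
        have h0 : ‖p - x‖ ^ 2 = 0 := le_antisymm hN (by positivity)
        exact norm_eq_zero.mp (pow_eq_zero_iff (n := 2) (by norm_num) |>.mp h0)
      rw [← sub_eq_zero]
      rw [show x - p = -(p - x) by abel, this, neg_zero]
    refine ⟨hxp, by rw [hv, hxp], he⟩
  · rintro ⟨hx, hv, he⟩
    subst he
    rw [hv, hx]
    refine ⟨le_refl _, ?_, ?_⟩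
    · intro z
      have hu : (1/α) • (y - p) - L • (p - y) - f' y = (1/lam) • (w - p) := by
        rw [hwdef, hlamdef]
        have h1 : (1 + α * L) ≠ 0 := ne_of_gt hden
        have h2 : α ≠ 0 := ne_of_gt hα0
        match_scalars <;> (field_simp; try ring)
      rw [hu, sub_zero]
      exact key z
    · have h0 : α • ((1/α) • (y - p)) + p - y = 0 := by
        rw [smul_smul, mul_one_div, div_self (ne_of_gt hα0), one_smul]; abel
      rw [h0]
      simp
end
end

section
/- Suppose (x̃, v, ε) satisfies the IER Rule error bound ‖αv + x̃ - y‖² + 2αε ≤ σ²‖x̃ - y‖² with σ ∈ [0,1], α > 0, ε ≥ 0. Then for every c ∈ E: ⟨v, c - x̃⟩ - ε ≥ ((1 - σ²)/(2α))‖x̃ - y‖² - (1/(2α))‖c - y‖². -/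
noncomputable section

/-- Consequence of the IER error bound: if `‖α v + x̃ - y‖² + 2αε ≤ σ²‖x̃ - y‖²`, then for
every `c`, `⟨v, c - x̃⟩ - ε ≥ ((1 - σ²)/(2α))‖x̃ - y‖² - (1/(2α))‖c - y‖²`. -/
theorem IER_error_consequence {E : Type*} [NormedAddCommGroup E] [InnerProductSpace ℝ E]
    [FiniteDimensional ℝ E]
    (α σ ε : ℝ) (hα : 0 < α) (hσ : σ ∈ Set.Icc (0 : ℝ) 1) (hε : 0 ≤ ε)
    (y xt v : E)
    (herr : ‖α • v + xt - y‖ ^ 2 + 2 * α * ε ≤ σ ^ 2 * ‖xt - y‖ ^ 2) :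
    ∀ c : E, (1 - σ ^ 2) / (2 * α) * ‖xt - y‖ ^ 2 - 1 / (2 * α) * ‖c - y‖ ^ 2
      ≤ (inner ℝ v (c - xt) : ℝ) - ε := by
  intro c
  have h1 : ‖(α • v + xt - y) + (c - xt)‖ ^ 2
      = ‖α • v + xt - y‖ ^ 2 + 2 * (inner ℝ (α • v + xt - y) (c - xt) : ℝ) + ‖c - xt‖ ^ 2 := by
    rw [norm_add_sq_real]
  have h2 : ‖c - y‖ ^ 2 = ‖c - xt‖ ^ 2 + 2 * (inner ℝ (c - xt) (xt - y) : ℝ) + ‖xt - y‖ ^ 2 := by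
    have : c - y = (c - xt) + (xt - y) := by abel
    rw [this, norm_add_sq_real]
  have h3 : (inner ℝ (α • v + xt - y) (c - xt) : ℝ)
      = α * (inner ℝ v (c - xt) : ℝ) + (inner ℝ (xt - y) (c - xt) : ℝ) := by
    have : α • v + xt - y = α • v + (xt - y) := by abel
    rw [this, inner_add_left, real_inner_smul_left]
  have h4 : (inner ℝ (c - xt) (xt - y) : ℝ) = (inner ℝ (xt - y) (c - xt) : ℝ) :=
    real_inner_comm _ _
  have h5 : (0:ℝ) ≤ ‖(α • v + xt - y) + (c - xt)‖ ^ 2 := by positivity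
  rw [div_mul_eq_mul_div, div_mul_eq_mul_div, div_sub_div_same, div_le_iff₀ (by positivity)]
  nlinarith [h1, h2, h3, h4, h5, herr]
end
end

section
/- For the sequence generated by IE-FISTA with σ ∈ [0,1) and α > 1/L, the objective gap satisfies F(x̃_k) - F* ≤ 2(1 + αL) d_0² / (α k²) for all k ≥ 1, where d_0 is the distance from x_0 to the solution set. -/
noncomputable section

section Aux

open Set

variable {E : Type*} [NormedAddCommGroup E] [InnerProductSpace ℝ E] [CompleteSpace E]

lemma IEF_hasDerivAt_line (f : E → ℝ) (f' : E → E) (hgrad : ∀ x, HasGradientAt f (f' x) x)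
    (y s : E) (t : ℝ) :
    HasDerivAt (fun t : ℝ => f (y + t • s)) (inner ℝ (f' (y + t • s)) s : ℝ) t := by
  have hc : HasDerivAt (fun t : ℝ => y + t • s) s t := by
    simpa using ((hasDerivAt_id t).smul_const s).const_add y
  have h := (hgrad (y + t • s)).hasFDerivAt.comp_hasDerivAt t hc
  exact h

lemma IEF_convex_grad_ineq (f : E → ℝ) (f' : E → E) (hfconv : ConvexOn ℝ Set.univ f)
    (hgrad : ∀ x, HasGradientAt f (f' x) x) (y z : E) :
    f y + (inner ℝ (f' y) (z - y) : ℝ) ≤ f z := by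
  have hφ : ConvexOn ℝ Set.univ (fun t : ℝ => f (y + t • (z - y))) := by
    have h := hfconv.comp_affineMap (AffineMap.lineMap y z)
    simp only [Set.preimage_univ] at h
    convert h using 2 with t
    all_goals try rfl
    simp [AffineMap.lineMap_apply, add_comm]
  have hd := IEF_hasDerivAt_line f f' hgrad y (z - y) 0
  have hs := hφ.le_slope_of_hasDerivAt (mem_univ (0:ℝ)) (mem_univ (1:ℝ)) one_pos (by simpa using hd)
  simp [slope_def_field] at hs
  linarith

lemma IEF_descent (f : E → ℝ) (f' : E → E) (L : ℝ)
    (hgrad : ∀ x, HasGradientAt f (f' x) x)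
    (hlip : ∀ x y : E, ‖f' x - f' y‖ ≤ L * ‖x - y‖) (y z : E) :
    f z ≤ f y + (inner ℝ (f' y) (z - y) : ℝ) + L / 2 * ‖z - y‖ ^ 2 := by
  set s := z - y with hs
  set ψ : ℝ → ℝ :=
    fun t => f (y + t • s) - t * (inner ℝ (f' y) s : ℝ) - L * ‖s‖ ^ 2 * t ^ 2 / 2 with hψ
  have hψd : ∀ t : ℝ, HasDerivAt ψ
      ((inner ℝ (f' (y + t • s)) s : ℝ) - (inner ℝ (f' y) s : ℝ) - L * ‖s‖ ^ 2 * t) t := by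
    intro t
    have h1 := IEF_hasDerivAt_line f f' hgrad y s t
    have h2 : HasDerivAt (fun t : ℝ => t * (inner ℝ (f' y) s : ℝ)) (inner ℝ (f' y) s : ℝ) t := by
      simpa using (hasDerivAt_id t).mul_const (inner ℝ (f' y) s : ℝ)
    have h3 : HasDerivAt (fun t : ℝ => L * ‖s‖ ^ 2 * t ^ 2 / 2) (L * ‖s‖ ^ 2 * t) t := by
      have h := ((hasDerivAt_pow 2 t).const_mul (L * ‖s‖ ^ 2)).div_const 2
      convert h using 1
      all_goals try rfl
      ring
    exact (h1.sub h2).sub h3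
  have hanti : AntitoneOn ψ (Set.Icc (0:ℝ) 1) := by
    apply antitoneOn_of_deriv_nonpos (convex_Icc 0 1)
    · exact fun t _ => (hψd t).continuousAt.continuousWithinAt
    · exact fun t _ => (hψd t).differentiableAt.differentiableWithinAt
    · intro t ht
      rw [interior_Icc] at ht
      rw [(hψd t).deriv]
      have h1 : (inner ℝ (f' (y + t • s)) s : ℝ) - (inner ℝ (f' y) s : ℝ)
          ≤ L * ‖s‖ ^ 2 * t := by
        have h2 : (inner ℝ (f' (y + t • s)) s : ℝ) - (inner ℝ (f' y) s : ℝ)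
            = (inner ℝ (f' (y + t • s) - f' y) s : ℝ) := by rw [inner_sub_left]
        rw [h2]
        calc (inner ℝ (f' (y + t • s) - f' y) s : ℝ)
            ≤ ‖f' (y + t • s) - f' y‖ * ‖s‖ := real_inner_le_norm _ _
          _ ≤ (L * ‖y + t • s - y‖) * ‖s‖ := by
              gcongr; exact hlip _ _
          _ = L * ‖s‖ ^ 2 * t := by
              have : y + t • s - y = t • s := by abel
              rw [this, norm_smul, Real.norm_eq_abs, abs_of_pos ht.1]
              ring
      linarith
  have hkey := hanti (Set.left_mem_Icc.mpr zero_le_one) (Set.right_mem_Icc.mpr zero_le_one)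
    zero_le_one
  simp only [hψ, zero_smul, add_zero, one_smul, zero_mul, one_pow, zero_pow, mul_one] at hkey
  have hz : y + s = z := by rw [hs]; abel
  rw [hz] at hkey
  linarith

lemma IEF_bracket (α L σ εk : ℝ) (hα : 0 < α) (hL : 0 < L) (hσ1 : σ ^ 2 ≤ 1)
    (hε : 0 ≤ εk) (v s : E)
    (herr : ‖α • v + s‖ ^ 2 + 2 * α * εk ≤ σ ^ 2 * ‖s‖ ^ 2) :
    (inner ℝ (v - L • s) s : ℝ) + (L / 2 * ‖s‖ ^ 2 + εk)
      + (α / (1 + α * L)) / 2 * ‖v - L • s‖ ^ 2 ≤ 0 := by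
  have hμ : (0:ℝ) < 1 + α * L := by positivity
  set a := ‖v‖
  set b := ‖s‖
  set c : ℝ := inner ℝ v s
  have hP : ‖α • v + s‖ ^ 2 = α ^ 2 * a ^ 2 + 2 * α * c + b ^ 2 := by
    rw [norm_add_sq_real, norm_smul, real_inner_smul_left, Real.norm_eq_abs,
      abs_of_pos hα]
    ring
  have hW : ‖v - L • s‖ ^ 2 = a ^ 2 - 2 * L * c + L ^ 2 * b ^ 2 := by
    rw [norm_sub_sq_real, norm_smul, real_inner_smul_right, Real.norm_eq_abs,
      abs_of_pos hL]
    ring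
  have hws : (inner ℝ (v - L • s) s : ℝ) = c - L * b ^ 2 := by
    rw [inner_sub_left, real_inner_smul_left, real_inner_self_eq_norm_sq]
  rw [hW, hws]
  rw [hP] at herr
  have hPnn : (0:ℝ) ≤ α ^ 2 * a ^ 2 + 2 * α * c + b ^ 2 := by rw [← hP]; positivity
  have hb : (0:ℝ) ≤ b ^ 2 := sq_nonneg b
  rw [div_div]
  have key : 0 ≤ -(2 * ((1 + α * L) * 2)) * ((c - L * b ^ 2) + (L / 2 * b ^ 2 + εk))
      - 2 * (α * (a ^ 2 - 2 * L * c + L ^ 2 * b ^ 2)) := by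
    nlinarith [mul_nonneg hL.le (sub_nonneg.mpr (show 2 * α * εk ≤ b ^ 2 by nlinarith)),
      mul_nonneg (mul_nonneg hα.le hL.le) hε, sq_nonneg σ]
  have heq : c - L * b ^ 2 + (L / 2 * b ^ 2 + εk)
      + α / ((1 + α * L) * 2) * (a ^ 2 - 2 * L * c + L ^ 2 * b ^ 2)
      = (-(-(2 * ((1 + α * L) * 2)) * ((c - L * b ^ 2) + (L / 2 * b ^ 2 + εk))
        - 2 * (α * (a ^ 2 - 2 * L * c + L ^ 2 * b ^ 2)))) / (2 * ((1 + α * L) * 2)) := by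
    field_simp
    ring
  rw [heq]
  apply div_nonpos_of_nonpos_of_nonneg
  · linarith [key]
  · positivity

lemma IEF_vector_step (τ0 τ1 lam C A0 A1 : ℝ) (hτ0 : 0 ≤ τ0) (hτ01 : τ0 ≤ τ1)
    (hΔsq : (τ1 - τ0) ^ 2 = lam * τ1)
    (w xk xk1 yk xt1 xtk xstar : E)
    (hy : τ1 • yk = τ0 • xtk + (τ1 - τ0) • xk)
    (hx1 : xk1 = xk - (τ1 - τ0) • w)
    (h1 : A1 ≤ (inner ℝ w (xt1 - xstar) : ℝ) + C)
    (h0 : τ0 = 0 ∨ A1 - A0 ≤ (inner ℝ w (xt1 - xtk) : ℝ) + C)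
    (hbr : (inner ℝ w (xt1 - yk) : ℝ) + C + lam / 2 * ‖w‖ ^ 2 ≤ 0) :
    τ1 * A1 + 1 / 2 * ‖xk1 - xstar‖ ^ 2 ≤ τ0 * A0 + 1 / 2 * ‖xk - xstar‖ ^ 2 := by
  have hnorm : ‖xk1 - xstar‖ ^ 2
      = ‖xk - xstar‖ ^ 2 - 2 * ((τ1 - τ0) * (inner ℝ w (xk - xstar) : ℝ))
        + (τ1 - τ0) ^ 2 * ‖w‖ ^ 2 := by
    rw [hx1, sub_right_comm, norm_sub_sq_real, real_inner_smul_right, norm_smul,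
      Real.norm_eq_abs, mul_pow, sq_abs, real_inner_comm]
  have hyi : τ1 * (inner ℝ w yk : ℝ) = τ0 * (inner ℝ w xtk : ℝ)
      + (τ1 - τ0) * (inner ℝ w xk : ℝ) := by
    have := congrArg (fun z => (inner ℝ w z : ℝ)) hy
    simpa [inner_add_right, real_inner_smul_right] using this
  have h0' : τ0 * (A1 - A0) ≤ τ0 * ((inner ℝ w (xt1 - xtk) : ℝ) + C) := by
    rcases h0 with h | h
    · simp [h]
    · exact mul_le_mul_of_nonneg_left h hτ0
  have h1' : (τ1 - τ0) * A1 ≤ (τ1 - τ0) * ((inner ℝ w (xt1 - xstar) : ℝ) + C) := by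
    exact mul_le_mul_of_nonneg_left h1 (by linarith)
  have hbr' : τ1 * ((inner ℝ w (xt1 - yk) : ℝ) + C + lam / 2 * ‖w‖ ^ 2) ≤ 0 := by
    apply mul_nonpos_of_nonneg_of_nonpos (by linarith) hbr
  have hΔw : (τ1 - τ0) ^ 2 * ‖w‖ ^ 2 = lam * τ1 * ‖w‖ ^ 2 := by rw [hΔsq]
  simp only [inner_sub_right] at h0' h1' hbr' hnorm ⊢
  ring_nf at h0' h1' hbr' hnorm hΔw ⊢
  linarith [hnorm, hyi, h0', h1', hbr', hΔw]

lemma IEF_key (f : E → ℝ) (f' : E → E) (L : ℝ)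
    (hfconv : ConvexOn ℝ Set.univ f)
    (hgrad : ∀ x, HasGradientAt f (f' x) x)
    (hlip : ∀ x y : E, ‖f' x - f' y‖ ≤ L * ‖x - y‖)
    (g : E → EReal) (xt1 yk vk : E) (εk : ℝ)
    (hincl : vk - L • (xt1 - yk) - f' yk ∈ epsSubdiff g εk xt1)
    (g1 : ℝ) (hg1 : g xt1 = (g1 : EReal)) (z : E) (gz : ℝ) (hgz : g z = (gz : EReal)) :
    f xt1 + g1 ≤ f z + gz + (inner ℝ (vk + L • (yk - xt1)) (xt1 - z) : ℝ)
      + L / 2 * ‖xt1 - yk‖ ^ 2 + εk := by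
  have hdes := IEF_descent f f' L hgrad hlip yk xt1
  have hconv := IEF_convex_grad_ineq f f' hfconv hgrad yk z
  have hsub : g1 + ((inner ℝ (vk - L • (xt1 - yk) - f' yk) (z - xt1) : ℝ) - εk) ≤ gz := by
    have h := hincl z
    rw [hg1, hgz, ← EReal.coe_add] at h
    exact_mod_cast h
  have hid : (inner ℝ (f' yk) (xt1 - yk) : ℝ) - (inner ℝ (f' yk) (z - yk) : ℝ)
      - (inner ℝ (vk - L • (xt1 - yk) - f' yk) (z - xt1) : ℝ)
      = (inner ℝ (vk + L • (yk - xt1)) (xt1 - z) : ℝ) := by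
    simp only [inner_sub_left, inner_sub_right, inner_add_left, real_inner_smul_left]
    ring
  linarith

lemma IEF_heq (α M k2 n : ℝ) (hα : α ≠ 0) (hM : M ≠ 0) (hk2 : k2 ≠ 0) :
    2 * n / (α / M * k2) = 2 * M / (α * k2) * n := by
  field_simp

end Aux

/-- Optimal convergence rate of IE-FISTA:
`F(x̃ k) - F* ≤ 2(1 + αL) d₀² / (α k²)` for all `k ≥ 1`. -/
theorem IEFISTA_rate {E : Type*} [NormedAddCommGroup E] [InnerProductSpace ℝ E]
    [FiniteDimensional ℝ E]
    (L α σ : ℝ) (hL : 0 < L) (hα : 1 / L < α) (hσ : 0 ≤ σ ∧ σ < 1)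
    (f : E → ℝ) (f' : E → E) (hfconv : ConvexOn ℝ Set.univ f)
    (hgrad : ∀ x : E, HasGradientAt f (f' x) x)
    (hlip : ∀ x y : E, ‖f' x - f' y‖ ≤ L * ‖x - y‖)
    (g : E → EReal) (hgp : ProperFn g) (hglsc : LowerSemicontinuous g) (hgconv : ConvexFn g)
    (x xt y v : ℕ → E) (ε τs : ℕ → ℝ)
    (hτ0 : τs 0 = 0) (hxt0 : xt 0 = x 0)
    (hτrec : ∀ k : ℕ, τs (k + 1) = τs k
        + (α / (1 + α * L)
          + Real.sqrt ((α / (1 + α * L)) ^ 2 + 4 * (α / (1 + α * L)) * τs k)) / 2)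
    (hyrec : ∀ k : ℕ, y k = (τs k / τs (k + 1)) • xt k
        + ((τs (k + 1) - τs k) / τs (k + 1)) • x k)
    (hεk : ∀ k : ℕ, 0 ≤ ε (k + 1))
    (hincl : ∀ k : ℕ,
        v (k + 1) - L • (xt (k + 1) - y k) - f' (y k) ∈ epsSubdiff g (ε (k + 1)) (xt (k + 1)))
    (herr : ∀ k : ℕ,
        ‖α • v (k + 1) + xt (k + 1) - y k‖ ^ 2 + 2 * α * ε (k + 1)
          ≤ σ ^ 2 * ‖xt (k + 1) - y k‖ ^ 2)
    (hxrec : ∀ k : ℕ,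
        x (k + 1) = x k - (τs (k + 1) - τs k) • (v (k + 1) + L • (y k - xt (k + 1))))
    (Sstar : Set E) (Fstar : ℝ)
    (hS : Sstar = {z : E | ∀ w : E, (f z : EReal) + g z ≤ (f w : EReal) + g w})
    (hSne : Sstar.Nonempty)
    (hFs : ∀ z ∈ Sstar, (f z : EReal) + g z = (Fstar : EReal))
    (hfin : ∀ k : ℕ, 1 ≤ k → g (xt k) ≠ ⊤) :
    ∀ k : ℕ, 1 ≤ k →
      ((f (xt k) : EReal) + g (xt k)).toReal - Fstar
        ≤ 2 * (1 + α * L) / (α * (k : ℝ) ^ 2) * (Metric.infDist (x 0) Sstar) ^ 2 := by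
  have hα0 : 0 < α := lt_trans (by positivity) hα
  have hμ : (0:ℝ) < 1 + α * L := by positivity
  set lam := α / (1 + α * L) with hlam
  have hlam0 : 0 < lam := by positivity
  have hσ1 : σ ^ 2 ≤ 1 := by nlinarith [hσ.1, hσ.2]
  -- τ facts
  have hτnn : ∀ k, 0 ≤ τs k := by
    intro k
    induction k with
    | zero => rw [hτ0]
    | succ n ih =>
      rw [hτrec n]
      have h := Real.sqrt_nonneg (lam ^ 2 + 4 * lam * τs n)
      linarith
  have hsqrtarg : ∀ k, (0:ℝ) ≤ lam ^ 2 + 4 * lam * τs k := by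
    intro k
    have := hτnn k
    positivity
  have hτlt : ∀ k, τs k + lam ≤ τs (k + 1) := by
    intro k
    rw [hτrec k]
    have h1 : lam ≤ Real.sqrt (lam ^ 2 + 4 * lam * τs k) := by
      rw [show lam ^ 2 + 4 * lam * τs k = lam ^ 2 + 4 * lam * τs k from rfl]
      apply Real.le_sqrt' hlam0 |>.mpr
      nlinarith [hτnn k]
    linarith
  have hΔsq : ∀ k, (τs (k + 1) - τs k) ^ 2 = lam * τs (k + 1) := by
    intro k
    have hr2 : Real.sqrt (lam ^ 2 + 4 * lam * τs k) ^ 2 = lam ^ 2 + 4 * lam * τs k :=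
      Real.sq_sqrt (hsqrtarg k)
    rw [hτrec k]
    linear_combination hr2 / 4
  have hτpos : ∀ k : ℕ, 0 < τs (k + 1) := by
    intro k
    have h1 := hτlt k
    have h2 := hτnn k
    linarith
  have hsqgrow : ∀ k : ℕ, (k : ℝ) * Real.sqrt lam / 2 ≤ Real.sqrt (τs k) := by
    intro k
    induction k with
    | zero => simp [Real.sqrt_nonneg]
    | succ n ih =>
      have hstep : Real.sqrt (τs n) + Real.sqrt lam / 2 ≤ Real.sqrt (τs (n + 1)) := by
        rw [show Real.sqrt (τs n) + Real.sqrt lam / 2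
            = Real.sqrt ((Real.sqrt (τs n) + Real.sqrt lam / 2) ^ 2) from
          (Real.sqrt_sq (by positivity)).symm]
        apply Real.sqrt_le_sqrt
        have hexp : (Real.sqrt (τs n) + Real.sqrt lam / 2) ^ 2
            = τs n + Real.sqrt lam * Real.sqrt (τs n) + lam / 4 := by
          have e1 : Real.sqrt (τs n) ^ 2 = τs n := Real.sq_sqrt (hτnn n)
          have e2 : Real.sqrt lam ^ 2 = lam := Real.sq_sqrt hlam0.le
          nlinarith [e1, e2]
        rw [hexp, hτrec n]
        have hsl : 2 * (Real.sqrt lam * Real.sqrt (τs n))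
            ≤ Real.sqrt (lam ^ 2 + 4 * lam * τs n) := by
          rw [← Real.sqrt_mul_self (by positivity : (0:ℝ) ≤ 2 * (Real.sqrt lam * Real.sqrt (τs n)))]
          apply Real.sqrt_le_sqrt
          have e1 : Real.sqrt (τs n) ^ 2 = τs n := Real.sq_sqrt (hτnn n)
          have e2 : Real.sqrt lam ^ 2 = lam := Real.sq_sqrt hlam0.le
          nlinarith [sq_nonneg lam]
        linarith
      push_cast
      have := ih
      linarith [hstep, Real.sqrt_nonneg lam]
  have hτlow : ∀ k : ℕ, lam * (k : ℝ) ^ 2 / 4 ≤ τs k := by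
    intro k
    have h := hsqgrow k
    have h2 : ((k : ℝ) * Real.sqrt lam / 2) ^ 2 ≤ Real.sqrt (τs k) ^ 2 := by
      apply pow_le_pow_left₀ (by positivity) h
    rw [Real.sq_sqrt (hτnn k)] at h2
    have e2 : Real.sqrt lam ^ 2 = lam := Real.sq_sqrt hlam0.le
    nlinarith [h2, e2]
  -- continuity and closedness of Sstar
  have hfd : Differentiable ℝ f := fun z => (hgrad z).hasFDerivAt.differentiableAt
  have hlscF : LowerSemicontinuous (fun z : E => (f z : EReal) + g z) := by
    apply LowerSemicontinuous.add'
    · exact (continuous_coe_real_ereal.comp hfd.continuous).lowerSemicontinuous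
    · exact hglsc
    · intro z
      apply EReal.continuousAt_add
      · exact Or.inl (EReal.coe_ne_top _)
      · exact Or.inl (EReal.coe_ne_bot _)
  have hSeq : Sstar = {z : E | (f z : EReal) + g z ≤ (Fstar : EReal)} := by
    ext z
    constructor
    · intro hz
      simp only [Set.mem_setOf_eq]
      rw [hFs z hz]
    · intro hz
      obtain ⟨z0, hz0⟩ := hSne
      rw [hS]
      intro w
      calc (f z : EReal) + g z ≤ (Fstar : EReal) := hz
        _ = (f z0 : EReal) + g z0 := (hFs z0 hz0).symm
        _ ≤ (f w : EReal) + g w := by rw [hS] at hz0; exact hz0 w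
  have hSclosed : IsClosed Sstar := by
    rw [hSeq]
    have hopen := lowerSemicontinuous_iff_isOpen_preimage.mp hlscF (Fstar : EReal)
    have heq : {z : E | (f z : EReal) + g z ≤ (Fstar : EReal)}
        = ((fun z : E => (f z : EReal) + g z) ⁻¹' Set.Ioi (Fstar : EReal))ᶜ := by
      ext z
      simp [not_lt]
    rw [heq]
    exact hopen.isClosed_compl
  obtain ⟨xstar, hxstarS, hxdist⟩ := hSclosed.exists_infDist_eq_dist hSne (x 0)
  -- g xstar is finite
  have hfxstar := hFs xstar hxstarS
  have hgsne_top : g xstar ≠ ⊤ := by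
    intro h
    rw [h] at hfxstar
    simp [EReal.add_top_of_ne_bot] at hfxstar
  set gs : ℝ := (g xstar).toReal with hgs_def
  have hgs : g xstar = (gs : EReal) := (EReal.coe_toReal hgsne_top (hgp.2 xstar)).symm
  have hgsF : f xstar + gs = Fstar := by
    rw [hgs, ← EReal.coe_add] at hfxstar
    exact_mod_cast hfxstar
  -- the real-valued objective gap
  set G : ℕ → ℝ := fun k => (g (xt k)).toReal with hG
  set A : ℕ → ℝ := fun k => f (xt k) + G k - Fstar with hA
  have hgco : ∀ k : ℕ, 1 ≤ k → g (xt k) = ((G k : ℝ) : EReal) := by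
    intro k hk
    exact (EReal.coe_toReal (hfin k hk) (hgp.2 _)).symm
  -- the per-step energy decrease
  have hE : ∀ k : ℕ, τs (k + 1) * A (k + 1) + 1 / 2 * ‖x (k + 1) - xstar‖ ^ 2
      ≤ τs k * A k + 1 / 2 * ‖x k - xstar‖ ^ 2 := by
    intro k
    have hτ1pos : 0 < τs (k + 1) := hτpos k
    set w : E := v (k + 1) + L • (y k - xt (k + 1)) with hw
    set C : ℝ := L / 2 * ‖xt (k + 1) - y k‖ ^ 2 + ε (k + 1) with hC
    have hg1 := hgco (k + 1) (by omega)
    have hkey : ∀ z : E, ∀ gz : ℝ, g z = (gz : EReal) →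
        f (xt (k + 1)) + G (k + 1) ≤ f z + gz + (inner ℝ w (xt (k + 1) - z) : ℝ) + C := by
      intro z gz hgz
      have := IEF_key f f' L hfconv hgrad hlip g (xt (k + 1)) (y k) (v (k + 1)) (ε (k + 1))
        (hincl k) (G (k + 1)) hg1 z gz hgz
      rw [hC]
      linarith
    apply IEF_vector_step (τs k) (τs (k + 1)) lam C (A k) (A (k + 1)) (hτnn k)
      (by linarith [hτlt k]) (hΔsq k) w (x k) (x (k + 1)) (y k) (xt (k + 1)) (xt k) xstar
    · -- hy
      rw [hyrec k, smul_add, smul_smul, smul_smul,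
        mul_div_cancel₀ _ (ne_of_gt hτ1pos) , mul_div_cancel₀ _ (ne_of_gt hτ1pos)]
    · exact hxrec k
    · -- h1
      have h := hkey xstar gs hgs
      rw [hA]
      simp only
      linarith [hgsF]
    · -- h0
      by_cases hτk : τs k = 0
      · exact Or.inl hτk
      · right
        have hk1 : 1 ≤ k := by
          by_contra h
          push_neg at h
          interval_cases k
          exact hτk hτ0
        have h := hkey (xt k) (G k) (hgco k hk1)
        rw [hA]
        simp only
        linarith
    · -- bracket
      have hwe : w = v (k + 1) - L • (xt (k + 1) - y k) := by
        rw [hw, smul_sub, smul_sub]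
        abel
      have herr' : ‖α • v (k + 1) + (xt (k + 1) - y k)‖ ^ 2 + 2 * α * ε (k + 1)
          ≤ σ ^ 2 * ‖xt (k + 1) - y k‖ ^ 2 := by
        rw [← add_sub_assoc]
        exact herr k
      have hb := IEF_bracket α L σ (ε (k + 1)) hα0 hL hσ1 (hεk k)
        (v (k + 1)) (xt (k + 1) - y k) herr'
      rw [hwe, hC]
      rw [← hlam] at hb
      linarith
  -- telescoping
  have hEmono : ∀ k : ℕ, τs k * A k + 1 / 2 * ‖x k - xstar‖ ^ 2
      ≤ 1 / 2 * ‖x 0 - xstar‖ ^ 2 := by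
    intro k
    induction k with
    | zero => rw [hτ0]; simp
    | succ n ih => exact le_trans (hE n) ih
  -- conclusion
  intro k hk
  have hAk : ((f (xt k) : EReal) + g (xt k)).toReal - Fstar = A k := by
    rw [hgco k hk, ← EReal.coe_add, EReal.toReal_coe, hA]
  rw [hAk, hxdist, dist_eq_norm]
  have hEk : τs k * A k ≤ 1 / 2 * ‖x 0 - xstar‖ ^ 2 := by
    have h := hEmono k
    nlinarith [sq_nonneg ‖x k - xstar‖]
  have hk2 : (0:ℝ) < (k : ℝ) ^ 2 := by
    have : (1:ℝ) ≤ (k : ℝ) := by exact_mod_cast hk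
    positivity
  by_cases hAneg : A k ≤ 0
  · apply le_trans hAneg
    apply mul_nonneg
    · apply div_nonneg (by positivity)
      positivity
    · exact sq_nonneg _
  · push_neg at hAneg
    have h1 : lam * (k : ℝ) ^ 2 / 4 * A k ≤ τs k * A k :=
      mul_le_mul_of_nonneg_right (hτlow k) hAneg.le
    have h2 : A k ≤ 2 * ‖x 0 - xstar‖ ^ 2 / (lam * (k : ℝ) ^ 2) := by
      rw [le_div_iff₀ (by positivity)]
      have h3 := le_trans h1 hEk
      ring_nf at h3 ⊢
      linarith [h3]
    refine le_trans h2 ?_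
    rw [hlam]
    exact (IEF_heq α (1 + α * L) ((k : ℝ) ^ 2) (‖x 0 - xstar‖ ^ 2)
      (ne_of_gt hα0) (ne_of_gt hμ) (ne_of_gt hk2)).le
end
end
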